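/- Let G be a group, g ∈ [G,G], and φ a homogeneous quasimorphism on G with defect D(φ). Then |φ(g)| ≤ 2·D(φ)·scl_G(g), where scl_G(g) = lim_n cl_G(g^n)/n and cl_G denotes commutator length. (Easy direction of Bavard duality.) -/

import Mathlib

open Filter Topology
open scoped commutatorElement

/-- The set of lengths of expressions of `g` as a product of commutators. -/
def clSet {G : Type*} [Group G] (g : G) : Set ℕ :=
  {n | ∃ l : List (G × G), l.length = n ∧ (l.map fun p => ⁅p.1, p.2⁆).prod = g}

/-- The commutator length of `g` (junk value if `g ∉ [G,G]`). -/
noncomputable def cl {G : Type*} [Group G] (g : G) : ℕ := sInf (clSet g)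

section Aux

variable {G : Type*} [Group G] (φ : G → ℝ) (D : ℝ)

lemma phi_one (hhom : ∀ (x : G) (n : ℤ), φ (x ^ n) = n * φ x) : φ 1 = 0 := by
  have := hhom 1 0; simpa using this

lemma phi_inv (hhom : ∀ (x : G) (n : ℤ), φ (x ^ n) = n * φ x) (x : G) :
    φ x⁻¹ = -φ x := by
  have := hhom x (-1); simpa using this

lemma phi_conj (hD : ∀ x y : G, |φ x + φ y - φ (x * y)| ≤ D)
    (hhom : ∀ (x : G) (n : ℤ), φ (x ^ n) = n * φ x) (x y : G) :
    φ (x * y * x⁻¹) = φ y := by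
  by_contra hne
  set c := φ (x * y * x⁻¹) - φ y with hc
  have hc0 : 0 < |c| := abs_pos.mpr (sub_ne_zero.mpr hne)
  obtain ⟨n, hn⟩ := exists_nat_gt (2 * D / |c|)
  have key : (n : ℝ) * |c| ≤ 2 * D := by
    have h1 := hD x (y ^ n * x⁻¹)
    have h2 := hD (y ^ n) x⁻¹
    have e1 : φ ((x * y * x⁻¹) ^ n) = n * φ (x * y * x⁻¹) := by
      have := hhom (x * y * x⁻¹) n; simpa using this
    have e2 : φ (y ^ n) = n * φ y := by
      have := hhom y n; simpa using this
    have e3 : (x * y * x⁻¹) ^ n = x * (y ^ n * x⁻¹) := by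
      rw [conj_pow, mul_assoc]
    have e4 : φ x⁻¹ = -φ x := phi_inv φ hhom x
    rw [e3] at e1
    rw [e1] at h1
    rw [e2, e4] at h2
    have habs : |(n : ℝ) * c| ≤ 2 * D := by
      rw [abs_le] at h1 h2 ⊢
      rw [hc, mul_sub]
      constructor <;> linarith [h1.1, h1.2, h2.1, h2.2]
    calc (n : ℝ) * |c| = |(n : ℝ) * c| := by rw [abs_mul, Nat.abs_cast]
      _ ≤ 2 * D := habs
  have := (div_lt_iff₀ hc0).mp hn
  linarith

lemma phi_commutator (hD : ∀ x y : G, |φ x + φ y - φ (x * y)| ≤ D)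
    (hhom : ∀ (x : G) (n : ℤ), φ (x ^ n) = n * φ x) (a b : G) :
    |φ ⁅a, b⁆| ≤ D := by
  have h := hD (a * b * a⁻¹) b⁻¹
  rw [phi_conj φ D hD hhom a b, phi_inv φ hhom b] at h
  have e : a * b * a⁻¹ * b⁻¹ = ⁅a, b⁆ := (commutatorElement_def a b).symm
  rw [e] at h
  calc |φ ⁅a, b⁆| = |φ b + -φ b - φ ⁅a, b⁆| := by
        rw [show φ b + -φ b - φ ⁅a, b⁆ = -(φ ⁅a, b⁆) by ring, abs_neg]
    _ ≤ D := h

lemma phi_prod_bound (hD : ∀ x y : G, |φ x + φ y - φ (x * y)| ≤ D)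
    (hhom : ∀ (x : G) (n : ℤ), φ (x ^ n) = n * φ x) :
    ∀ l : List (G × G), |φ ((l.map fun p => ⁅p.1, p.2⁆).prod)| ≤ 2 * l.length * D := by
  intro l
  induction l with
  | nil => simp [phi_one φ hhom]
  | cons p l ih =>
      have hc := phi_commutator φ D hD hhom p.1 p.2
      have h := hD ⁅p.1, p.2⁆ ((l.map fun p => ⁅p.1, p.2⁆).prod)
      have e : ((p :: l).map fun p => ⁅p.1, p.2⁆).prod
          = ⁅p.1, p.2⁆ * (l.map fun p => ⁅p.1, p.2⁆).prod := by simp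
      rw [e]
      have habs : |φ (⁅p.1, p.2⁆ * (l.map fun p => ⁅p.1, p.2⁆).prod)|
          ≤ |φ ⁅p.1, p.2⁆| + |φ ((l.map fun p => ⁅p.1, p.2⁆).prod)| + D := by
        have : φ (⁅p.1, p.2⁆ * (l.map fun p => ⁅p.1, p.2⁆).prod)
            = (φ ⁅p.1, p.2⁆ + φ ((l.map fun p => ⁅p.1, p.2⁆).prod))
              - (φ ⁅p.1, p.2⁆ + φ ((l.map fun p => ⁅p.1, p.2⁆).prod)
                 - φ (⁅p.1, p.2⁆ * (l.map fun p => ⁅p.1, p.2⁆).prod)) := by ring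
        rw [this]
        calc _ ≤ |φ ⁅p.1, p.2⁆ + φ ((l.map fun p => ⁅p.1, p.2⁆).prod)|
              + |φ ⁅p.1, p.2⁆ + φ ((l.map fun p => ⁅p.1, p.2⁆).prod)
                 - φ (⁅p.1, p.2⁆ * (l.map fun p => ⁅p.1, p.2⁆).prod)| := abs_sub _ _
          _ ≤ _ := by
              have := abs_add_le (φ ⁅p.1, p.2⁆) (φ ((l.map fun p => ⁅p.1, p.2⁆).prod))
              linarith
      have : (((p :: l).length : ℝ)) = l.length + 1 := by simp
      rw [this]
      linarith

lemma clSet_nonempty {g : G} (hg : g ∈ commutator G) : (clSet g).Nonempty := by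
  rw [commutator_eq_closure] at hg
  have hg' : g ∈ Submonoid.closure (commutatorSet G ∪ (commutatorSet G)⁻¹) := by
    have h' : g ∈ (Subgroup.closure (commutatorSet G)).toSubmonoid := hg
    rwa [Subgroup.closure_toSubmonoid] at h'
  obtain ⟨l, hl, hprod⟩ := Submonoid.exists_list_of_mem_closure hg'
  subst hprod
  clear hg hg'
  induction l with
  | nil => exact ⟨0, [], rfl, by simp⟩
  | cons a l ih =>
      obtain ⟨n, L, hL, hLprod⟩ := ih (fun y hy => hl y (List.mem_cons_of_mem a hy))
      have ha := hl a (List.mem_cons_self (a := a) (l := l))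
      have : ∃ p : G × G, ⁅p.1, p.2⁆ = a := by
        rcases ha with ha | ha
        · obtain ⟨x, y, hxy⟩ := ha
          exact ⟨(x, y), hxy⟩
        · obtain ⟨x, y, hxy⟩ := Set.mem_inv.mp ha
          exact ⟨(y, x), by rw [← commutatorElement_inv, hxy, inv_inv]⟩
      obtain ⟨p, hp⟩ := this
      exact ⟨n + 1, p :: L, by simp [hL], by simp [hp, hLprod]⟩

end Aux

theorem bavard_easy_direction
    {G : Type*} [Group G] (g : G)
    (hg : g ∈ commutator G)
    (φ : G → ℝ) (D : ℝ)
    (hD : ∀ x y : G, |φ x + φ y - φ (x * y)| ≤ D)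
    (hhom : ∀ (x : G) (n : ℤ), φ (x ^ n) = n * φ x)
    (s : ℝ)
    (hs : Tendsto (fun n : ℕ => (cl (g ^ n) : ℝ) / n) atTop (𝓝 s)) :
    |φ g| ≤ 2 * D * s := by
  have hD0 : 0 ≤ D := by
    have h := hD 1 1
    rw [mul_one, phi_one φ hhom] at h
    simpa using h
  have hs' : Tendsto (fun n : ℕ => 2 * D * ((cl (g ^ n) : ℝ) / n)) atTop (𝓝 (2 * D * s)) :=
    hs.const_mul (2 * D)
  refine ge_of_tendsto hs' ?_
  filter_upwards [eventually_ge_atTop 1] with n hn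
  have hpos : (0 : ℝ) < n := by exact_mod_cast hn
  -- cl (g ^ n) is attained
  have hmem : g ^ n ∈ commutator G := Subgroup.pow_mem _ hg n
  have hne := clSet_nonempty hmem
  have hcl : cl (g ^ n) ∈ clSet (g ^ n) := Nat.sInf_mem hne
  obtain ⟨l, hlen, hlprod⟩ := hcl
  have hbound : |φ (g ^ n)| ≤ 2 * (cl (g ^ n) : ℝ) * D := by
    have := phi_prod_bound φ D hD hhom l
    rw [hlprod, hlen] at this
    exact this
  have hpow : φ (g ^ n) = n * φ g := by
    have := hhom g n; simpa using this
  rw [hpow, abs_mul, Nat.abs_cast] at hbound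
  rw [mul_div_assoc', le_div_iff₀ hpos]
  calc |φ g| * n = n * |φ g| := by ring
    _ ≤ 2 * (cl (g ^ n) : ℝ) * D := hbound
    _ = 2 * D * (cl (g ^ n) : ℝ) := by ring
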